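/- arXiv:2005.03287 — 2 statements merged into one kernel-verified Lean document; each statement's English description precedes it below -/
import Mathlib

section
/- If A + B is nonsingular, then x solves the GAVE Ax + B|x| = b if and only if, setting x⁺ = |x| + x and x⁻ = |x| − x, one has x⁺ = (A+B)^{-1}(A−B)x⁻ + 2(A+B)^{-1}b, with x⁺ ≥ 0, x⁻ ≥ 0 and (x⁺)ᵀx⁻ = 0; i.e., the GAVE is equivalent to a linear complementarity problem with matrix M = (A+B)^{-1}(A−B) and q = 2(A+B)^{-1}b. -/
open Matrix

/-- A square real matrix is a `P`-matrix if all of its principal minors are positive. -/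
def IsPMatrix {n : ℕ} (M : Matrix (Fin n) (Fin n) ℝ) : Prop :=
  ∀ s : Finset (Fin n), s.Nonempty →
    0 < (M.submatrix (fun i : s => (i : Fin n)) (fun i : s => (i : Fin n))).det

/-- The (unordered) singular values of a real square matrix: square roots of the
eigenvalues of `Aᵀ * A`. -/
noncomputable def singVals {n : ℕ} (A : Matrix (Fin n) (Fin n) ℝ) : Fin n → ℝ :=
  fun i => Real.sqrt (((by simpa [Matrix.conjTranspose_eq_transpose_of_trivial] using Matrix.isHermitian_conjTranspose_mul_self A : (Aᵀ * A).IsHermitian)).eigenvalues i)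

/-- `svalsDecr A i` is the `i`-th largest singular value of `A` (so `svalsDecr A 0 = σ₁`). -/
noncomputable def svalsDecr {n : ℕ} (A : Matrix (Fin n) (Fin n) ℝ) : Fin n → ℝ :=
  fun i => singVals A (Tuple.sort (singVals A) (Fin.rev i))

/-- The maximal singular value `σ₁`. -/
noncomputable def maxSV {n : ℕ} (A : Matrix (Fin n) (Fin n) ℝ) : ℝ :=
  ⨆ i, singVals A i

/-- The minimal singular value `σₙ`. -/
noncomputable def minSV {n : ℕ} (A : Matrix (Fin n) (Fin n) ℝ) : ℝ :=
  ⨅ i, singVals A i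

/-- The spectral radius of a real square matrix (as the spectral radius of its
complexification), valued in `ℝ≥0∞`. -/
noncomputable def specRad {n : ℕ} (A : Matrix (Fin n) (Fin n) ℝ) : ENNReal :=
  spectralRadius ℂ (A.map (Complex.ofReal))

theorem stmt5 {n : ℕ} (A B : Matrix (Fin n) (Fin n) ℝ) (hAB : IsUnit (A + B))
    (b x : Fin n → ℝ) :
    A *ᵥ x + B *ᵥ |x| = b ↔
      (|x| + x = ((A + B)⁻¹ * (A - B)) *ᵥ (|x| - x) + (2 : ℝ) • ((A + B)⁻¹ *ᵥ b) ∧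
        0 ≤ |x| + x ∧ 0 ≤ |x| - x ∧ (|x| + x) ⬝ᵥ (|x| - x) = 0) := by
  have hdet : IsUnit (A + B).det := (Matrix.isUnit_iff_isUnit_det _).mp hAB
  have hinv : (A + B)⁻¹ * (A + B) = 1 := Matrix.nonsing_inv_mul _ hdet
  have hinv' : (A + B) * (A + B)⁻¹ = 1 := Matrix.mul_nonsing_inv _ hdet
  have cancel : ∀ v : Fin n → ℝ, (A + B)⁻¹ *ᵥ ((A + B) *ᵥ v) = v := fun v => by
    rw [Matrix.mulVec_mulVec, hinv, Matrix.one_mulVec]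
  have cancel' : ∀ v : Fin n → ℝ, (A + B) *ᵥ ((A + B)⁻¹ *ᵥ v) = v := fun v => by
    rw [Matrix.mulVec_mulVec, hinv', Matrix.one_mulVec]
  have hside1 : 0 ≤ |x| + x := fun i => by
    simp only [Pi.zero_apply, Pi.add_apply, Pi.abs_apply]
    linarith [neg_abs_le (x i)]
  have hside2 : 0 ≤ |x| - x := fun i => by
    simp only [Pi.zero_apply, Pi.sub_apply, Pi.abs_apply]
    linarith [le_abs_self (x i)]
  have hside3 : (|x| + x) ⬝ᵥ (|x| - x) = 0 := by
    apply Finset.sum_eq_zero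
    intro i _
    simp only [Pi.add_apply, Pi.sub_apply, Pi.abs_apply]
    nlinarith [sq_abs (x i)]
  have key : A *ᵥ x + B *ᵥ |x| = b ↔
      (A + B) *ᵥ (|x| + x) = (A - B) *ᵥ (|x| - x) + (2 : ℝ) • b := by
    rw [Matrix.add_mulVec, Matrix.sub_mulVec, Matrix.mulVec_add, Matrix.mulVec_sub,
      Matrix.mulVec_add, Matrix.mulVec_sub]
    constructor
    · intro h
      funext i
      have hi := congrFun h i
      simp only [Pi.add_apply, Pi.sub_apply, Pi.smul_apply, smul_eq_mul] at hi ⊢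
      linarith
    · intro h
      funext i
      have hi := congrFun h i
      simp only [Pi.add_apply, Pi.sub_apply, Pi.smul_apply, smul_eq_mul] at hi ⊢
      linarith
  constructor
  · intro h
    refine ⟨?_, hside1, hside2, hside3⟩
    have h' := key.mp h
    calc |x| + x = (A + B)⁻¹ *ᵥ ((A + B) *ᵥ (|x| + x)) := (cancel _).symm
      _ = (A + B)⁻¹ *ᵥ ((A - B) *ᵥ (|x| - x) + (2 : ℝ) • b) := by rw [h']
      _ = ((A + B)⁻¹ * (A - B)) *ᵥ (|x| - x) + (2 : ℝ) • ((A + B)⁻¹ *ᵥ b) := by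
          rw [Matrix.mulVec_add, Matrix.mulVec_smul, Matrix.mulVec_mulVec]
  · rintro ⟨h1, -, -, -⟩
    apply key.mpr
    calc (A + B) *ᵥ (|x| + x)
        = (A + B) *ᵥ (((A + B)⁻¹ * (A - B)) *ᵥ (|x| - x) + (2 : ℝ) • ((A + B)⁻¹ *ᵥ b)) := by
          rw [h1]
      _ = (A - B) *ᵥ (|x| - x) + (2 : ℝ) • b := by
          rw [Matrix.mulVec_add, Matrix.mulVec_smul, ← Matrix.mulVec_mulVec, cancel', cancel']
end

section
/- Let A, B ∈ ℝ^{n×n}. The GAVE Ax + B|x| = b has a unique solution for every b ∈ ℝ^n if and only if A − B + 2BD is nonsingular for every diagonal matrix D = diag(d_i) with 0 ≤ d_i ≤ 1. -/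
open Matrix

namespace GaveAux

variable {n : ℕ} (A B : Matrix (Fin n) (Fin n) ℝ)

/-- The parametrized matrix `A + B diag(t)`. -/
noncomputable def MM (t : Fin n → ℝ) : Matrix (Fin n) (Fin n) ℝ := A + B * Matrix.diagonal t

/-- The homotopy family `F s x = A x + s B |x|`. -/
noncomputable def FF (s : ℝ) (x : Fin n → ℝ) : Fin n → ℝ := A *ᵥ x + s • (B *ᵥ |x|)

lemma MM_mulVec (t v : Fin n → ℝ) : MM A B t *ᵥ v = A *ᵥ v + B *ᵥ (t * v) := by
  have h : Matrix.diagonal t *ᵥ v = t * v := by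
    funext i; simp [Matrix.mulVec_diagonal]
  rw [MM, Matrix.add_mulVec, ← Matrix.mulVec_mulVec, h]

lemma abs_decomp (x y : Fin n → ℝ) :
    ∃ t : Fin n → ℝ, (∀ i, |t i| ≤ 1) ∧ ∀ i, |x i| - |y i| = t i * (x i - y i) := by
  refine ⟨fun i => if h : x i = y i then 0 else (|x i| - |y i|) / (x i - y i), fun i => ?_, fun i => ?_⟩
  · by_cases h : x i = y i
    · simp [h]
    · have hne : x i - y i ≠ 0 := sub_ne_zero.mpr h
      simp only [h, dite_false]
      rw [abs_div, div_le_one (abs_pos.mpr hne)]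
      exact abs_abs_sub_abs_le_abs_sub _ _
  · by_cases h : x i = y i
    · simp [h]
    · have hne : x i - y i ≠ 0 := sub_ne_zero.mpr h
      simp only [h, dite_false]
      field_simp

lemma FF_sub (s : ℝ) (x y : Fin n → ℝ) :
    ∃ t : Fin n → ℝ, (∀ i, |t i| ≤ |s|) ∧ FF A B s x - FF A B s y = MM A B t *ᵥ (x - y) := by
  obtain ⟨t, ht, habs⟩ := abs_decomp x y
  refine ⟨s • t, fun i => ?_, ?_⟩
  · have := ht i
    calc |(s • t) i| = |s| * |t i| := by simp [abs_mul]
    _ ≤ |s| * 1 := by nlinarith [abs_nonneg s, abs_nonneg (t i)]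
    _ = |s| := mul_one _
  · have h1 : |x| - |y| = t * (x - y) := by
      funext i; simpa using habs i
    rw [MM_mulVec]
    rw [FF, FF, add_sub_add_comm, ← Matrix.mulVec_sub, ← smul_sub, ← Matrix.mulVec_sub, h1,
      ← Matrix.mulVec_smul]
    congr 1
    congr 1
    funext i
    simp [Pi.smul_apply, Pi.mul_apply]
    ring


lemma coerc (hn : 0 < n)
    (hM : ∀ t : Fin n → ℝ, (∀ i, |t i| ≤ 1) → IsUnit (MM A B t)) :
    ∃ c > 0, ∀ t : Fin n → ℝ, (∀ i, |t i| ≤ 1) → ∀ v : Fin n → ℝ,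
      c * ‖v‖ ≤ ‖MM A B t *ᵥ v‖ := by
  haveI : Nonempty (Fin n) := Fin.pos_iff_nonempty.mp hn
  set K : Set ((Fin n → ℝ) × (Fin n → ℝ)) :=
    (Set.Icc (-1 : Fin n → ℝ) 1) ×ˢ (Metric.sphere (0 : Fin n → ℝ) 1) with hKdef
  have hKc : IsCompact K := (isCompact_Icc).prod (isCompact_sphere _ _)
  have hKne : K.Nonempty := by
    refine ⟨(0, fun _ => 1), ⟨?_, ?_⟩⟩
    · constructor <;> intro i <;> simp
    · simp [mem_sphere_zero_iff_norm, pi_norm_const']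
  have hcont : Continuous fun p : (Fin n → ℝ) × (Fin n → ℝ) => ‖MM A B p.1 *ᵥ p.2‖ := by
    have h1 : ∀ p : (Fin n → ℝ) × (Fin n → ℝ),
        MM A B p.1 *ᵥ p.2 = A.mulVecLin.toContinuousLinearMap p.2
          + B.mulVecLin.toContinuousLinearMap (p.1 * p.2) := by
      intro p; rw [MM_mulVec]; simp
    simp only [h1]
    exact (((A.mulVecLin.toContinuousLinearMap.continuous.comp continuous_snd).add
      (B.mulVecLin.toContinuousLinearMap.continuous.comp
        (continuous_fst.mul continuous_snd)))).norm
  obtain ⟨p₀, hp₀K, hmin⟩ := hKc.exists_isMinOn hKne hcont.continuousOn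
  set c := ‖MM A B p₀.1 *ᵥ p₀.2‖ with hc
  have hmemt : ∀ t : Fin n → ℝ, (∀ i, |t i| ≤ 1) → t ∈ Set.Icc (-1 : Fin n → ℝ) 1 := by
    intro t ht
    constructor <;> intro i <;> have := abs_le.mp (ht i)
    · exact this.1
    · exact this.2
  have hcpos : 0 < c := by
    rcases hp₀K with ⟨ht₀, hv₀⟩
    have ht₀' : ∀ i, |p₀.1 i| ≤ 1 := by
      intro i; rw [abs_le]; exact ⟨ht₀.1 i, ht₀.2 i⟩
    have hv₀n : p₀.2 ≠ 0 := by
      intro h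
      rw [mem_sphere_zero_iff_norm, h] at hv₀
      simp at hv₀
    have hinj := Matrix.mulVec_injective_iff_isUnit.mpr (hM p₀.1 ht₀')
    have : MM A B p₀.1 *ᵥ p₀.2 ≠ 0 := by
      intro h
      exact hv₀n (hinj (by rw [h, Matrix.mulVec_zero]))
    exact norm_pos_iff.mpr this
  refine ⟨c, hcpos, fun t ht v => ?_⟩
  rcases eq_or_ne v 0 with rfl | hv
  · simp
  · have hvn : 0 < ‖v‖ := norm_pos_iff.mpr hv
    set w : Fin n → ℝ := ‖v‖⁻¹ • v with hw
    have hwn : ‖w‖ = 1 := norm_smul_inv_norm hv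
    have hmemK : (t, w) ∈ K := ⟨hmemt t ht, by rwa [mem_sphere_zero_iff_norm]⟩
    have hle : c ≤ ‖MM A B t *ᵥ w‖ := isMinOn_iff.mp hmin (t, w) hmemK
    have heq : ‖MM A B t *ᵥ w‖ = ‖v‖⁻¹ * ‖MM A B t *ᵥ v‖ := by
      rw [hw, Matrix.mulVec_smul, norm_smul, Real.norm_eq_abs, abs_of_nonneg (by positivity)]
    rw [heq] at hle
    rw [mul_comm]
    calc ‖v‖ * c ≤ ‖v‖ * (‖v‖⁻¹ * ‖MM A B t *ᵥ v‖) := by gcongr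
    _ = ‖MM A B t *ᵥ v‖ := by field_simp

lemma abs_lip (x y : Fin n → ℝ) : ‖|x| - |y|‖ ≤ ‖x - y‖ := by
  rw [pi_norm_le_iff_of_nonneg (norm_nonneg _)]
  intro i
  calc ‖(|x| - |y|) i‖ = |(|x i| - |y i|)| := by simp [Real.norm_eq_abs]
  _ ≤ |x i - y i| := abs_abs_sub_abs_le_abs_sub _ _
  _ = ‖(x - y) i‖ := by simp [Real.norm_eq_abs]
  _ ≤ ‖x - y‖ := norm_le_pi_norm _ i

lemma FF_lower {c : ℝ}
    (hco : ∀ t : Fin n → ℝ, (∀ i, |t i| ≤ 1) → ∀ v : Fin n → ℝ,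
      c * ‖v‖ ≤ ‖MM A B t *ᵥ v‖)
    {s : ℝ} (h0 : 0 ≤ s) (h1 : s ≤ 1) (x y : Fin n → ℝ) :
    c * ‖x - y‖ ≤ ‖FF A B s x - FF A B s y‖ := by
  obtain ⟨t, ht, heq⟩ := FF_sub A B s x y
  have ht' : ∀ i, |t i| ≤ 1 := fun i => (ht i).trans (by rwa [abs_of_nonneg h0])
  rw [heq]
  exact hco t ht' (x - y)

lemma FF_inj {c : ℝ} (hc : 0 < c)
    (hco : ∀ t : Fin n → ℝ, (∀ i, |t i| ≤ 1) → ∀ v : Fin n → ℝ,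
      c * ‖v‖ ≤ ‖MM A B t *ᵥ v‖)
    {s : ℝ} (h0 : 0 ≤ s) (h1 : s ≤ 1) : Function.Injective (FF A B s) := by
  intro x y hxy
  have := FF_lower A B hco h0 h1 x y
  rw [hxy, sub_self, norm_zero] at this
  have : ‖x - y‖ ≤ 0 := by nlinarith
  have : x - y = 0 := by
    rw [← norm_le_zero_iff]
    exact this
  exact sub_eq_zero.mp this

lemma FF_surj (hn : 0 < n)
    (hM : ∀ t : Fin n → ℝ, (∀ i, |t i| ≤ 1) → IsUnit (MM A B t)) :
    ∀ s : ℝ, 0 ≤ s → s ≤ 1 → Function.Surjective (FF A B s) := by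
  obtain ⟨c, hc, hco⟩ := coerc A B hn hM
  set LB := B.mulVecLin.toContinuousLinearMap with hLB
  set δ : ℝ := c / (2 * (‖LB‖ + 1)) with hδdef
  have hLB0 : (0:ℝ) ≤ ‖LB‖ := norm_nonneg _
  have hδ : 0 < δ := by positivity
  have key : ∀ k : ℕ, ∀ s : ℝ, 0 ≤ s → s ≤ 1 → s ≤ k * δ → Function.Surjective (FF A B s) := by
    intro k
    induction k with
    | zero =>
      intro s h0 h1 hk
      have hs : s = 0 := le_antisymm (by simpa using hk) h0
      subst hs
      have hA : IsUnit A := by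
        have h00 : MM A B (fun _ => 0) = A := by
          rw [MM, Matrix.diagonal_zero, mul_zero, add_zero]
        rw [← h00]
        exact hM (fun _ => 0) (by intro i; simp)
      intro b
      refine ⟨A⁻¹ *ᵥ b, ?_⟩
      rw [FF, zero_smul, add_zero, Matrix.mulVec_mulVec,
        Matrix.mul_nonsing_inv _ ((Matrix.isUnit_iff_isUnit_det _).mp hA), Matrix.one_mulVec]
    | succ k ih =>
      intro s h0 h1 hk b
      set s₀ : ℝ := max (s - δ) 0 with hs₀def
      have hs₀0 : 0 ≤ s₀ := le_max_right _ _
      have hs₀s : s₀ ≤ s := max_le (sub_le_self _ hδ.le) h0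
      have hs₀1 : s₀ ≤ 1 := hs₀s.trans h1
      have hs₀k : s₀ ≤ k * δ := by
        apply max_le
        · have : ((k:ℝ) + 1) * δ = k * δ + δ := by ring
          push_cast at hk
          nlinarith
        · positivity
      have hsurj₀ := ih s₀ hs₀0 hs₀1 hs₀k
      have hinj₀ := FF_inj A B hc hco hs₀0 hs₀1
      set E := Equiv.ofBijective _ ⟨hinj₀, hsurj₀⟩ with hE
      have hEap : ∀ y, FF A B s₀ (E.symm y) = y := fun y => E.apply_symm_apply y
      set e : ℝ := s - s₀ with hedef
      have he0 : 0 ≤ e := sub_nonneg.mpr hs₀s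
      have heδ : e ≤ δ := by
        have : s - δ ≤ s₀ := le_max_left _ _
        simp only [hedef]
        linarith
      set T : (Fin n → ℝ) → (Fin n → ℝ) := fun x => E.symm (b - e • (B *ᵥ |x|)) with hT
      have hcontr : ∀ x y, dist (T x) (T y) ≤ (1/2 : ℝ) * dist x y := by
        intro x y
        rw [dist_eq_norm, dist_eq_norm]
        have h1' : c * ‖T x - T y‖ ≤ ‖FF A B s₀ (T x) - FF A B s₀ (T y)‖ :=
          FF_lower A B hco hs₀0 hs₀1 _ _
        rw [hT] at h1'
        simp only [hEap] at h1'
        have h2' : (b - e • (B *ᵥ |x|)) - (b - e • (B *ᵥ |y|)) = e • (B *ᵥ (|y| - |x|)) := by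
          rw [Matrix.mulVec_sub, smul_sub]
          abel
        rw [h2'] at h1'
        have h3' : ‖e • (B *ᵥ (|y| - |x|))‖ ≤ e * (‖LB‖ * ‖y - x‖) := by
          rw [norm_smul, Real.norm_eq_abs, abs_of_nonneg he0]
          have hB : ‖B *ᵥ (|y| - |x|)‖ ≤ ‖LB‖ * ‖(|y| - |x|)‖ := by
            have := LB.le_opNorm (|y| - |x|)
            simpa [hLB] using this
          have habs := abs_lip y x
          gcongr
          exact hB.trans (by gcongr)
        have h4' : c * ‖T x - T y‖ ≤ e * (‖LB‖ * ‖y - x‖) := le_trans h1' h3'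
        have h5' : e * ‖LB‖ ≤ c / 2 := by
          have : δ * (‖LB‖ + 1) = c / 2 := by
            rw [hδdef]; field_simp
          nlinarith
        have h6' : ‖y - x‖ = ‖x - y‖ := norm_sub_rev _ _
        rw [h6'] at h4'
        have h7' := mul_le_mul_of_nonneg_right h5' (norm_nonneg (x - y))
        have h8' : c * ‖T x - T y‖ ≤ c * (1/2 * ‖x - y‖) := by
          calc c * ‖T x - T y‖ ≤ e * (‖LB‖ * ‖x - y‖) := h4'
          _ = e * ‖LB‖ * ‖x - y‖ := by ring
          _ ≤ c / 2 * ‖x - y‖ := h7'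
          _ = c * (1/2 * ‖x - y‖) := by ring
        exact (mul_le_mul_iff_right₀ hc).mp h8'
      have hctw : ContractingWith (1/2 : NNReal) T := by
        constructor
        · rw [← NNReal.coe_lt_one]
          norm_num
        · apply LipschitzWith.of_dist_le_mul
          intro x y
          have := hcontr x y
          calc dist (T x) (T y) ≤ (1/2 : ℝ) * dist x y := this
          _ = ((1/2 : NNReal) : ℝ) * dist x y := by norm_num
      set x := ContractingWith.fixedPoint T hctw with hx
      have hfix : T x = x := hctw.fixedPoint_isFixedPt
      refine ⟨x, ?_⟩
      have : FF A B s₀ x = b - e • (B *ᵥ |x|) := by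
        conv_lhs => rw [← hfix]
        rw [hT]
        simp only []
        exact hEap _
      rw [FF] at this ⊢
      have hse : s = s₀ + e := by rw [hedef]; ring
      rw [hse, add_smul, ← add_assoc, this]
      abel
  intro s h0 h1
  obtain ⟨k, hk⟩ := exists_nat_ge (1 / δ)
  apply key k s h0 h1
  have : 1 ≤ k * δ := by
    rw [div_le_iff₀ hδ] at hk
    linarith
  linarith

lemma key_eq (d : Fin n → ℝ) :
    A - B + (2:ℝ) • (B * Matrix.diagonal d) = MM A B (fun i => 2 * d i - 1) := by
  have h1 : Matrix.diagonal (fun i => 2 * d i - 1)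
      = (2:ℝ) • Matrix.diagonal d - 1 := by
    rw [← Matrix.diagonal_one, ← Matrix.diagonal_smul, ← Matrix.diagonal_sub]
    congr 1
  rw [MM, h1, mul_sub, Matrix.mul_smul, mul_one]
  abel

end GaveAux


open GaveAux in
theorem gave_main {n : ℕ} (A B : Matrix (Fin n) (Fin n) ℝ) :
    (∀ b : Fin n → ℝ, ∃! x : Fin n → ℝ, A *ᵥ x + B *ᵥ |x| = b) ↔
      ∀ d : Fin n → ℝ, (∀ i, d i ∈ Set.Icc (0 : ℝ) 1) →
        IsUnit (A - B + (2 : ℝ) • (B * Matrix.diagonal d)) := by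
  constructor
  · intro H d hd
    rw [key_eq A B d]
    set t : Fin n → ℝ := fun i => 2 * d i - 1 with htdef
    clear_value t
    have ht : ∀ i, |t i| ≤ 1 := by
      intro i
      obtain ⟨hl, hr⟩ := Set.mem_Icc.mp (hd i)
      rw [abs_le]
      constructor <;> simp only [htdef] <;> [linarith; linarith]
    rw [← Matrix.mulVec_injective_iff_isUnit]
    suffices hker : ∀ z, MM A B t *ᵥ z = 0 → z = 0 by
      intro z₁ z₂ hz
      have h0 : MM A B t *ᵥ (z₁ - z₂) = 0 := by
        rw [Matrix.mulVec_sub, hz, sub_self]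
      exact sub_eq_zero.mp (hker _ h0)
    intro z hz
    set sg : Fin n → ℝ := fun i => if 0 ≤ z i then t i else -t i with hsg
    set u : Fin n → ℝ := fun i => (1 + sg i) * z i / 2 with hu
    set v : Fin n → ℝ := fun i => (sg i - 1) * z i / 2 with hv
    clear_value sg u v
    have huv : u - v = z := by
      funext i
      simp only [Pi.sub_apply, hu, hv]
      ring
    have habs : ∀ i, |u i| - |v i| = t i * z i := by
      intro i
      obtain ⟨hl, hr⟩ := abs_le.mp (ht i)
      by_cases hzi : 0 ≤ z i
      · have e1 : (0:ℝ) ≤ (1 + t i) * z i := mul_nonneg (by linarith) hzi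
        have e2 : (0:ℝ) ≤ (1 - t i) * z i := mul_nonneg (by linarith) hzi
        simp only [hu, hv, hsg, if_pos hzi]
        rw [abs_of_nonneg (by nlinarith), abs_of_nonpos (by nlinarith)]
        ring
      · push_neg at hzi
        have e1 : (0:ℝ) ≤ (1 - t i) * (-(z i)) := mul_nonneg (by linarith) (by linarith)
        have e2 : (0:ℝ) ≤ (1 + t i) * (-(z i)) := mul_nonneg (by linarith) (by linarith)
        simp only [hu, hv, hsg, if_neg (not_le.mpr hzi)]
        rw [abs_of_nonpos (by nlinarith), abs_of_nonneg (by nlinarith)]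
        ring
    have habsv : |u| - |v| = t * z := by
      funext i
      simpa [Pi.sub_apply, Pi.abs_apply, Pi.mul_apply] using habs i
    have hFu : (A *ᵥ u + B *ᵥ |u|) - (A *ᵥ v + B *ᵥ |v|) = MM A B t *ᵥ z := by
      rw [MM_mulVec, add_sub_add_comm, ← Matrix.mulVec_sub, ← Matrix.mulVec_sub, huv, habsv]
    rw [hz] at hFu
    have heq : A *ᵥ u + B *ᵥ |u| = A *ᵥ v + B *ᵥ |v| := sub_eq_zero.mp hFu
    obtain ⟨w, hw, huniq⟩ := H (A *ᵥ u + B *ᵥ |u|)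
    have h1 := huniq u rfl
    have h2 := huniq v heq.symm
    rw [← huv, h1, h2, sub_self]
  · intro hR
    have hM : ∀ t : Fin n → ℝ, (∀ i, |t i| ≤ 1) → IsUnit (MM A B t) := by
      intro t ht
      have hd : ∀ i, (fun i => (t i + 1)/2) i ∈ Set.Icc (0:ℝ) 1 := by
        intro i
        obtain ⟨hl, hr⟩ := abs_le.mp (ht i)
        exact Set.mem_Icc.mpr ⟨by linarith, by linarith⟩
      have hthis := hR (fun i => (t i + 1)/2) hd
      rw [key_eq] at hthis
      have harg : (fun i => 2 * ((t i + 1)/2) - 1) = t := by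
        funext i; ring
      rwa [harg] at hthis
    rcases Nat.eq_zero_or_pos n with h0 | hn
    · subst h0
      intro b
      have hall : ∀ x : Fin 0 → ℝ, A *ᵥ x + B *ᵥ |x| = b := by
        intro x; funext i; exact i.elim0
      exact ⟨0, hall 0, fun y _ => funext fun i => i.elim0⟩
    · intro b
      obtain ⟨c, hc, hco⟩ := coerc A B hn hM
      obtain ⟨x, hx⟩ := FF_surj A B hn hM 1 zero_le_one le_rfl b
      have hFF : ∀ w : Fin n → ℝ, FF A B 1 w = A *ᵥ w + B *ᵥ |w| := by
        intro w; rw [FF, one_smul]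
      rw [hFF] at hx
      refine ⟨x, hx, fun y hy => ?_⟩
      apply FF_inj A B hc hco zero_le_one le_rfl
      rw [hFF, hFF, hy, hx]


theorem stmt9 {n : ℕ} (A B : Matrix (Fin n) (Fin n) ℝ) :
    (∀ b : Fin n → ℝ, ∃! x : Fin n → ℝ, A *ᵥ x + B *ᵥ |x| = b) ↔
      ∀ d : Fin n → ℝ, (∀ i, d i ∈ Set.Icc (0 : ℝ) 1) →
        IsUnit (A - B + (2 : ℝ) • (B * Matrix.diagonal d)) := by
  exact gave_main A B
end
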